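/- Let f(y) = (1 − cos(h·log y))/y with 0 ≤ h ≤ 1. Then |∫_2^∞ (ϑ(y) − y) · d/dy [f(y)/log y] dy| ≤ (3/2)·∫_2^∞ (2 + 3·log y)/(y·(log y)^3) dy < 9.62, assuming |ϑ(y) − y| ≤ 3y/(2 log y) for all y ≥ 2, where ϑ is the Chebyshev function ϑ(y) = Σ_{p ≤ y} log p. -/

import Mathlib

open Real MeasureTheory

noncomputable def chebTheta (y : ℝ) : ℝ :=
  ∑ p ∈ (Finset.range (Nat.floor y + 1)).filter Nat.Prime, Real.log p

theorem theta_error_integral_bound (h : ℝ) (h0 : 0 ≤ h) (h1 : h ≤ 1)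
    (htheta : ∀ y : ℝ, 2 ≤ y → |chebTheta y - y| ≤ 3 * y / (2 * Real.log y)) :
    |∫ y in Set.Ioi (2:ℝ), (chebTheta y - y) *
        deriv (fun y : ℝ => (1 - Real.cos (h * Real.log y)) / y / Real.log y) y| ≤
      (3/2) * ∫ y in Set.Ioi (2:ℝ), (2 + 3 * Real.log y) / (y * (Real.log y) ^ 3) ∧
    (3/2) * (∫ y in Set.Ioi (2:ℝ), (2 + 3 * Real.log y) / (y * (Real.log y) ^ 3)) < 9.62 := by
  have hlog2 : (0.6931471803:ℝ) < Real.log 2 := Real.log_two_gt_d9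
  have hlog2pos : (0:ℝ) < Real.log 2 := by linarith
  set g : ℝ → ℝ := fun y => (2 + 3 * Real.log y) / (y * (Real.log y) ^ 3) with hg
  set G : ℝ → ℝ := fun y => -((Real.log y) ^ 2)⁻¹ - 3 * (Real.log y)⁻¹ with hG
  -- derivative of the antiderivative
  have hderivG : ∀ y ∈ Set.Ici (2:ℝ), HasDerivAt G (g y) y := by
    intro y hy
    have hy2 : (2:ℝ) ≤ y := hy
    have hy0 : (0:ℝ) < y := by linarith
    have hL : (0:ℝ) < Real.log y := Real.log_pos (by linarith)
    have h1 : HasDerivAt Real.log y⁻¹ y := Real.hasDerivAt_log hy0.ne'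
    have h2 : HasDerivAt (fun y => (Real.log y) ^ 2) ((2:ℕ) * (Real.log y) ^ 1 * y⁻¹) y :=
      h1.pow 2
    have h3 := h2.inv (pow_ne_zero 2 hL.ne')
    have h4 := (h1.inv hL.ne').const_mul (3:ℝ)
    have h5 := h3.neg.sub h4
    have hLne : Real.log y ≠ 0 := hL.ne'
    have hyne : y ≠ 0 := hy0.ne'
    have e : g y = -(-(((2:ℕ):ℝ) * Real.log y ^ 1 * y⁻¹) / ((Real.log y ^ 2) ^ 2))
        - 3 * (-y⁻¹ / Real.log y ^ 2) := by
      push_cast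
      rw [hg]
      field_simp
      ring
    rw [e]
    exact h5
  have gpos : ∀ y ∈ Set.Ioi (2:ℝ), 0 ≤ g y := by
    intro y hy
    have hy0 : (0:ℝ) < y := by have := hy.out; linarith
    have hL : (0:ℝ) < Real.log y := Real.log_pos (by have := hy.out; linarith)
    apply div_nonneg
    · positivity
    · positivity
  have hG0 : Filter.Tendsto G Filter.atTop (nhds 0) := by
    have t1 : Filter.Tendsto (fun y => (Real.log y)⁻¹) Filter.atTop (nhds 0) :=
      Real.tendsto_log_atTop.inv_tendsto_atTop
    have t2 : Filter.Tendsto (fun y => ((Real.log y)⁻¹) ^ 2) Filter.atTop (nhds (0 ^ 2)) :=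
      t1.pow 2
    have t3 := (t2.neg).sub (t1.const_mul (3:ℝ))
    have : (-(0:ℝ) ^ 2 - 3 * 0) = 0 := by norm_num
    rw [this] at t3
    refine t3.congr fun y => ?_
    simp [hG, inv_pow]
  have hderivG' : ∀ y ∈ Set.Ioi (2:ℝ), HasDerivAt G (g y) y :=
    fun y hy => hderivG y (Set.mem_Ici.mpr (le_of_lt (Set.mem_Ioi.mp hy)))
  have hcontG : ContinuousWithinAt G (Set.Ici 2) 2 :=
    (hderivG 2 Set.self_mem_Ici).continuousAt.continuousWithinAt
  have hInt : IntegrableOn g (Set.Ioi 2) :=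
    integrableOn_Ioi_deriv_of_nonneg hcontG hderivG' gpos hG0
  have hval : ∫ y in Set.Ioi (2:ℝ), g y = 0 - G 2 :=
    integral_Ioi_of_hasDerivAt_of_nonneg hcontG hderivG' gpos hG0
  -- pointwise bound on the integrand
  have hpoint : ∀ y ∈ Set.Ioi (2:ℝ),
      |(chebTheta y - y) *
        deriv (fun y : ℝ => (1 - Real.cos (h * Real.log y)) / y / Real.log y) y| ≤
      3/2 * g y := by
    intro y hy
    have hy2 : (2:ℝ) < y := hy
    have hy0 : (0:ℝ) < y := by linarith
    have hL : (0:ℝ) < Real.log y := Real.log_pos (by linarith)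
    set L := Real.log y with hLdef
    set s := Real.sin (h * L) with hs
    set c := 1 - Real.cos (h * L) with hc
    -- compute the derivative
    have hlog : HasDerivAt Real.log y⁻¹ y := Real.hasDerivAt_log hy0.ne'
    have hin : HasDerivAt (fun y => h * Real.log y) (h * y⁻¹) y := hlog.const_mul h
    have hcos : HasDerivAt (fun y => Real.cos (h * Real.log y)) (-s * (h * y⁻¹)) y :=
      by have := (Real.hasDerivAt_cos (h * L)).comp y hin; exact this
    have hu : HasDerivAt (fun y => 1 - Real.cos (h * Real.log y)) (-(-s * (h * y⁻¹))) y :=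
      hcos.const_sub 1
    have hq : HasDerivAt (fun y => (1 - Real.cos (h * Real.log y)) / y)
        ((-(-s * (h * y⁻¹)) * y - c * 1) / y ^ 2) y := hu.div (hasDerivAt_id y) hy0.ne'
    have hF : HasDerivAt (fun y : ℝ => (1 - Real.cos (h * Real.log y)) / y / Real.log y)
        (((-(-s * (h * y⁻¹)) * y - c * 1) / y ^ 2 * L - c / y * y⁻¹) / L ^ 2) y :=
      hq.div hlog hL.ne'
    have hD : deriv (fun y : ℝ => (1 - Real.cos (h * Real.log y)) / y / Real.log y) y
        = ((-(-s * (h * y⁻¹)) * y - c * 1) / y ^ 2 * L - c / y * y⁻¹) / L ^ 2 := hF.deriv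
    have hDval : ((-(-s * (h * y⁻¹)) * y - c * 1) / y ^ 2 * L - c / y * y⁻¹) / L ^ 2
        = (L * (s * h - c) - c) / (y ^ 2 * L ^ 2) := by
      field_simp
    -- bound on sin, cos
    have hs1 : |s| ≤ 1 := Real.abs_sin_le_one (h * L)
    have hs1' : -1 ≤ s := (abs_le.mp hs1).1
    have hs1'' : s ≤ 1 := (abs_le.mp hs1).2
    have hc0 : 0 ≤ c := by
      have := Real.cos_le_one (h * L); simp [hc]; linarith
    have hc2 : c ≤ 2 := by
      have := Real.neg_one_le_cos (h * L); simp [hc]; linarith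
    have hsh : s * h ≤ 1 := by nlinarith
    have hsh' : -1 ≤ s * h := by nlinarith
    have hnum : |L * (s * h - c) - c| ≤ 2 + 3 * L := by
      rw [abs_le]
      constructor
      · nlinarith [mul_le_mul_of_nonneg_left (show -3 ≤ s * h - c by linarith) hL.le]
      · nlinarith [mul_le_mul_of_nonneg_left (show s * h - c ≤ 1 by linarith) hL.le]
    have hDbound : |deriv (fun y : ℝ => (1 - Real.cos (h * Real.log y)) / y / Real.log y) y|
        ≤ (2 + 3 * L) / (y ^ 2 * L ^ 2) := by
      rw [hD, hDval, abs_div, abs_of_pos (by positivity : (0:ℝ) < y ^ 2 * L ^ 2)]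
      exact div_le_div_of_nonneg_right hnum (by positivity) |>.trans_eq rfl
    calc |(chebTheta y - y) *
          deriv (fun y : ℝ => (1 - Real.cos (h * Real.log y)) / y / Real.log y) y|
        = |chebTheta y - y| *
          |deriv (fun y : ℝ => (1 - Real.cos (h * Real.log y)) / y / Real.log y) y| :=
          abs_mul _ _
      _ ≤ (3 * y / (2 * L)) * ((2 + 3 * L) / (y ^ 2 * L ^ 2)) := by
          apply mul_le_mul (htheta y hy2.le) hDbound (abs_nonneg _) (by positivity)
      _ = 3/2 * g y := by
          rw [hg]
          show _ = 3/2 * ((2 + 3 * L) / (y * L ^ 3))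
          field_simp
  -- conclude
  have hIntB : Integrable (fun y => 3/2 * g y) (volume.restrict (Set.Ioi 2)) :=
    hInt.const_mul (3/2)
  have hmain : |∫ y in Set.Ioi (2:ℝ), (chebTheta y - y) *
        deriv (fun y : ℝ => (1 - Real.cos (h * Real.log y)) / y / Real.log y) y| ≤
      (3/2) * ∫ y in Set.Ioi (2:ℝ), g y := by
    calc |∫ y in Set.Ioi (2:ℝ), (chebTheta y - y) *
          deriv (fun y : ℝ => (1 - Real.cos (h * Real.log y)) / y / Real.log y) y|
        ≤ ∫ y in Set.Ioi (2:ℝ), |(chebTheta y - y) *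
          deriv (fun y : ℝ => (1 - Real.cos (h * Real.log y)) / y / Real.log y) y| := by
          simpa only [Real.norm_eq_abs] using
            norm_integral_le_integral_norm (μ := volume.restrict (Set.Ioi 2))
            (fun y => (chebTheta y - y) *
              deriv (fun y : ℝ => (1 - Real.cos (h * Real.log y)) / y / Real.log y) y)
      _ ≤ ∫ y in Set.Ioi (2:ℝ), 3/2 * g y := by
          apply integral_mono_of_nonneg
          · exact Filter.Eventually.of_forall fun y => abs_nonneg _
          · exact hIntB
          · rw [Filter.EventuallyLE, ae_restrict_iff' measurableSet_Ioi]
            exact Filter.Eventually.of_forall hpoint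
      _ = (3/2) * ∫ y in Set.Ioi (2:ℝ), g y := integral_const_mul _ _
  have hnum : (3/2) * (∫ y in Set.Ioi (2:ℝ), g y) < 9.62 := by
    rw [hval]
    have hG2 : G 2 = -((Real.log 2) ^ 2)⁻¹ - 3 * (Real.log 2)⁻¹ := rfl
    rw [hG2]
    set L := Real.log 2 with hLdef
    have hx : (0:ℝ) - (-(L ^ 2)⁻¹ - 3 * L⁻¹) = (1 + 3 * L) / L ^ 2 := by
      field_simp
      ring
    rw [hx, mul_div_assoc', div_lt_iff₀ (by positivity)]
    nlinarith [hlog2]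
  exact ⟨hmain, hnum⟩
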